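/- Let X₁, X₂, … be i.i.d. random variables with values in [0,1] and mean μ, and let μ̂ₙ = (1/n)∑_{i=1}^n Xᵢ. Fix N ∈ ℕ⁺ and y ≥ 0. Then P(∃ n ≥ N : kl(μ̂ₙ, μ) ≥ y and μ̂ₙ > μ) ≤ e^{−Ny}. -/

import Mathlib

open MeasureTheory ProbabilityTheory Finset

/-- Binary Kullback-Leibler divergence between `Bernoulli(p)` and `Bernoulli(q)`. -/
noncomputable def klBin (p q : ℝ) : ℝ :=
  p * Real.log (p / q) + (1 - p) * Real.log ((1 - p) / (1 - q))

section Aux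

lemma my_exp_chord {lam x : ℝ} (h0 : 0 ≤ x) (h1 : x ≤ 1) :
    Real.exp (lam * x) ≤ 1 - x + x * Real.exp lam := by
  have h := convexOn_exp.2 (Set.mem_univ (0:ℝ)) (Set.mem_univ lam)
    (by linarith : (0:ℝ) ≤ 1 - x) h0 (by ring)
  simp only [smul_eq_mul, mul_zero, zero_add, Real.exp_zero, mul_one] at h
  rw [mul_comm lam x]
  linarith

lemma my_klBin_continuous {μ : ℝ} (h0 : 0 < μ) (h1 : μ < 1) :
    Continuous fun p => klBin p μ := by
  have h1μ : (0:ℝ) < 1 - μ := by linarith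
  have heq : (fun p => klBin p μ) = fun p =>
      μ * ((p/μ) * Real.log (p/μ)) + (1-μ) * (((1-p)/(1-μ)) * Real.log ((1-p)/(1-μ))) := by
    funext p
    unfold klBin
    have e1 : μ * (p / μ) = p := by field_simp
    have e2 : (1-μ) * ((1-p) / (1-μ)) = 1 - p := by field_simp
    rw [← mul_assoc, e1, ← mul_assoc, e2]
  rw [heq]
  apply Continuous.add
  · exact continuous_const.mul (Real.continuous_mul_log.comp (continuous_id.div_const μ))
  · exact continuous_const.mul
      (Real.continuous_mul_log.comp ((continuous_const.sub continuous_id).div_const (1-μ)))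

lemma my_lam_facts {μ t : ℝ} (h0 : 0 < μ) (hμt : μ < t) (ht1 : t < 1) :
    0 < Real.log (t*(1-μ)/(μ*(1-t))) ∧
    1 - μ + μ * Real.exp (Real.log (t*(1-μ)/(μ*(1-t)))) = (1-μ)/(1-t) ∧
    Real.log (t*(1-μ)/(μ*(1-t))) * t - Real.log ((1-μ)/(1-t)) = klBin t μ := by
  have ht0 : (0:ℝ) < t := h0.trans hμt
  have h1t : (0:ℝ) < 1 - t := by linarith
  have h1μ : (0:ℝ) < 1 - μ := by linarith
  have harg : (0:ℝ) < t*(1-μ)/(μ*(1-t)) := by positivity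
  have hgt1 : (1:ℝ) < t*(1-μ)/(μ*(1-t)) := by
    rw [lt_div_iff₀ (by positivity)]
    nlinarith
  refine ⟨Real.log_pos hgt1, ?_, ?_⟩
  · rw [Real.exp_log harg]
    field_simp
    ring
  · rw [Real.log_div (by positivity : (0:ℝ) < t*(1-μ)).ne' (by positivity : (0:ℝ) < μ*(1-t)).ne',
      Real.log_mul ht0.ne' h1μ.ne', Real.log_mul h0.ne' h1t.ne',
      Real.log_div h1μ.ne' h1t.ne']
    unfold klBin
    rw [Real.log_div ht0.ne' h0.ne', Real.log_div h1t.ne' h1μ.ne']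
    ring

lemma my_ville {Ω : Type*} [MeasurableSpace Ω] (P : Measure Ω) [IsProbabilityMeasure P]
    (X : ℕ → Ω → ℝ) (hmeas : ∀ i, Measurable (X i))
    (hindep : iIndepFun X P)
    (W : ℝ → ℝ) (hWm : Measurable W) (hW0 : ∀ u, 0 ≤ W u) (C : ℝ) (hWb : ∀ u, W u ≤ C)
    (hWint : ∀ i, ∫ ω, W (X i ω) ∂P ≤ 1)
    (c : ℝ) (hc : 0 < c) :
    P {ω | ∃ n, c ≤ ∏ i ∈ Finset.range n, W (X i ω)} ≤ ENNReal.ofReal (1 / c) := by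
  have hC : 0 ≤ C := le_trans (hW0 0) (hWb 0)
  -- the "wealth" process as a function of the coordinates
  set V : (ℕ → ℝ) → ℕ → ℝ := fun u n => ∏ i ∈ Finset.range n, W (u i) with hV
  have hVm : ∀ n, Measurable (fun u : ℕ → ℝ => V u n) := by
    intro n
    exact Finset.measurable_prod _ fun i _ => hWm.comp (measurable_pi_apply i)
  have hV0 : ∀ u n, 0 ≤ V u n := fun u n => Finset.prod_nonneg fun i _ => hW0 _
  have hVb : ∀ u n, V u n ≤ C ^ n := by
    intro u n
    calc V u n ≤ ∏ _i ∈ Finset.range n, C :=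
          Finset.prod_le_prod (fun i _ => hW0 _) (fun i _ => hWb _)
      _ = C ^ n := by simp
  set M : ℕ → Ω → ℝ := fun n ω => V (fun i => X i ω) n with hM
  have hMm : ∀ n, Measurable (M n) := fun n =>
    (hVm n).comp (measurable_pi_lambda _ fun i => hmeas i)
  have hMint : ∀ n, Integrable (M n) P := by
    intro n
    refine Integrable.mono' (integrable_const (C ^ n)) (hMm n).aestronglyMeasurable ?_
    filter_upwards with ω
    rw [Real.norm_eq_abs, abs_of_nonneg (hV0 _ _)]
    exact hVb _ _
  set B : ℕ → Set Ω := fun k => {ω | ∀ m < k, M m ω < c} with hB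
  set A : ℕ → Set Ω := fun n => {ω | c ≤ M n ω ∧ ∀ m < n, M m ω < c} with hA
  have hBmeas : ∀ k, MeasurableSet (B k) := by
    intro k
    have : B k = ⋂ m, ⋂ _h : m < k, {ω | M m ω < c} := by
      ext ω; simp [hB, Set.mem_iInter]
    rw [this]
    exact MeasurableSet.iInter fun m => MeasurableSet.iInter fun _ =>
      measurableSet_lt (hMm m) measurable_const
  have hAmeas : ∀ n, MeasurableSet (A n) := by
    intro n
    have : A n = {ω | c ≤ M n ω} ∩ B n := by ext ω; simp [hA, hB, and_comm]
    rw [this]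
    exact (measurableSet_le measurable_const (hMm n)).inter (hBmeas n)
  -- key supermartingale step
  have hstep : ∀ T : ℕ, ∫ ω in B (T + 1), M (T + 1) ω ∂P ≤ ∫ ω in B (T + 1), M T ω ∂P := by
    intro T
    -- the indicator as a function of the first T coordinates
    set F : (ℕ → ℝ) → ℝ :=
      fun u => Set.indicator {u : ℕ → ℝ | ∀ m < T + 1, V u m < c} (fun u => V u T) u with hF
    have hFm : Measurable F := by
      apply Measurable.indicator (hVm T)
      have : {u : ℕ → ℝ | ∀ m < T + 1, V u m < c}
          = ⋂ m, ⋂ _h : m < T + 1, {u | V u m < c} := by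
        ext u; simp [Set.mem_iInter]
      rw [this]
      exact MeasurableSet.iInter fun m => MeasurableSet.iInter fun _ =>
        measurableSet_lt (hVm m) measurable_const
    have hF0 : ∀ u, 0 ≤ F u := by
      intro u
      exact Set.indicator_nonneg (fun u _ => hV0 u T) u
    -- truncation: V u m only depends on coordinates < m
    have htrunc : ∀ (u : ℕ → ℝ) m, m ≤ T →
        V (fun i => if i < T then u i else 0) m = V u m := by
      intro u m hm
      apply Finset.prod_congr rfl
      intro i hi
      rw [Finset.mem_range] at hi
      simp [lt_of_lt_of_le hi hm]
    have hFtr : ∀ ω, F (fun i => if i < T then X i ω else 0)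
        = Set.indicator (B (T + 1)) (M T) ω := by
      intro ω
      by_cases h : ω ∈ B (T + 1)
      · rw [Set.indicator_of_mem h]
        have hmem : (fun i => if i < T then X i ω else 0) ∈
            {u : ℕ → ℝ | ∀ m < T + 1, V u m < c} := by
          intro m hm
          rw [htrunc _ m (Nat.lt_succ_iff.mp hm)]
          exact h m hm
        rw [hF]
        simp only [Set.indicator_of_mem hmem]
        exact htrunc _ T le_rfl
      · rw [Set.indicator_of_notMem h]
        have hmem : (fun i => if i < T then X i ω else 0) ∉
            {u : ℕ → ℝ | ∀ m < T + 1, V u m < c} := by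
          intro hcon
          apply h
          intro m hm
          have := hcon m hm
          rwa [htrunc _ m (Nat.lt_succ_iff.mp hm)] at this
        rw [hF]
        simp only [Set.indicator_of_notMem hmem]
    -- independence
    have hkey : IndepFun (fun ω => F (fun i => if i < T then X i ω else 0))
        (fun ω => W (X T ω)) P := by
      have hdisj : Disjoint (Finset.range T) ({T} : Finset ℕ) := by
        simp [Finset.disjoint_singleton_right]
      have base := hindep.indepFun_finset (Finset.range T) {T} hdisj hmeas
      have hφm : Measurable (fun v : ↥(Finset.range T) → ℝ =>
          F (fun i => if h : i ∈ Finset.range T then v ⟨i, h⟩ else 0)) := by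
        apply hFm.comp
        apply measurable_pi_lambda
        intro i
        by_cases h : i ∈ Finset.range T
        · simp only [dif_pos h]; exact measurable_pi_apply _
        · simp only [dif_neg h]; exact measurable_const
      have hψm : Measurable (fun v : ↥({T} : Finset ℕ) → ℝ =>
          W (v ⟨T, Finset.mem_singleton_self T⟩)) :=
        hWm.comp (measurable_pi_apply _)
      have := base.comp hφm hψm
      convert this using 1
      · funext ω
        simp only [Function.comp]
        congr 1
        funext i
        by_cases h : i ∈ Finset.range T
        · rw [dif_pos h, if_pos (Finset.mem_range.mp h)]
        · rw [dif_neg h, if_neg (fun hc => h (Finset.mem_range.mpr hc))]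
      · rfl
    -- compute
    have hMsucc : ∀ ω, M (T + 1) ω = M T ω * W (X T ω) := by
      intro ω
      exact Finset.prod_range_succ _ _
    calc ∫ ω in B (T + 1), M (T + 1) ω ∂P
        = ∫ ω, Set.indicator (B (T + 1)) (M (T + 1)) ω ∂P := by
          rw [integral_indicator (hBmeas (T + 1))]
      _ = ∫ ω, (F (fun i => if i < T then X i ω else 0)) * W (X T ω) ∂P := by
          apply integral_congr_ae
          filter_upwards with ω
          rw [hFtr]
          by_cases h : ω ∈ B (T + 1)
          · rw [Set.indicator_of_mem h, Set.indicator_of_mem h, hMsucc]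
          · rw [Set.indicator_of_notMem h, Set.indicator_of_notMem h, zero_mul]
      _ = (∫ ω, F (fun i => if i < T then X i ω else 0) ∂P) * ∫ ω, W (X T ω) ∂P := by
          exact hkey.integral_fun_mul_eq_mul_integral
            (hFm.comp (measurable_pi_lambda _ fun i => by
              by_cases h : i < T
              · simpa [h] using (hmeas i)
              · simpa [h] using measurable_const)).aestronglyMeasurable
            (hWm.comp (hmeas T)).aestronglyMeasurable
      _ ≤ (∫ ω, F (fun i => if i < T then X i ω else 0) ∂P) * 1 := by
          apply mul_le_mul_of_nonneg_left (hWint T)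
          exact integral_nonneg fun ω => hF0 _
      _ = ∫ ω in B (T + 1), M T ω ∂P := by
          rw [mul_one, ← integral_indicator (hBmeas (T + 1))]
          apply integral_congr_ae
          filter_upwards with ω
          rw [hFtr]
  -- the main induction
  have hmain : ∀ T : ℕ, ∑ n ∈ Finset.range T, ∫ ω in A n, M n ω ∂P
      + ∫ ω in B T, M T ω ∂P ≤ 1 := by
    intro T
    induction T with
    | zero =>
        simp only [Finset.range_zero, Finset.sum_empty, zero_add]
        have hB0 : B 0 = Set.univ := by ext ω; simp [hB]
        have hM0 : M 0 = fun _ => (1 : ℝ) := by funext ω; simp [hM, hV]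
        rw [hB0, hM0, Measure.restrict_univ]
        simp
    | succ T ih =>
        have hsplit : B T = A T ∪ B (T + 1) := by
          ext ω
          simp only [hA, hB, Set.mem_union, Set.mem_setOf_eq]
          constructor
          · intro h
            by_cases hc' : c ≤ M T ω
            · exact Or.inl ⟨hc', h⟩
            · refine Or.inr fun m hm => ?_
              rcases Nat.lt_succ_iff_lt_or_eq.mp hm with h' | h'
              · exact h m h'
              · rw [h']; exact lt_of_not_ge hc'
          · rintro (⟨_, h⟩ | h)
            · exact h
            · exact fun m hm => h m (Nat.lt_succ_of_lt hm)
        have hdisj : Disjoint (A T) (B (T + 1)) := by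
          rw [Set.disjoint_left]
          rintro ω ⟨h1, _⟩ h2
          exact absurd h1 (not_le.mpr (h2 T (Nat.lt_succ_self T)))
        have hBsplit : ∫ ω in B T, M T ω ∂P
            = ∫ ω in A T, M T ω ∂P + ∫ ω in B (T + 1), M T ω ∂P := by
          rw [hsplit, setIntegral_union hdisj (hBmeas (T + 1))
            ((hMint T).integrableOn) ((hMint T).integrableOn)]
        rw [Finset.sum_range_succ]
        calc ∑ n ∈ Finset.range T, ∫ ω in A n, M n ω ∂P + ∫ ω in A T, M T ω ∂P
              + ∫ ω in B (T + 1), M (T + 1) ω ∂P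
            ≤ ∑ n ∈ Finset.range T, ∫ ω in A n, M n ω ∂P + ∫ ω in A T, M T ω ∂P
              + ∫ ω in B (T + 1), M T ω ∂P := by
              have := hstep T
              linarith
          _ = ∑ n ∈ Finset.range T, ∫ ω in A n, M n ω ∂P + ∫ ω in B T, M T ω ∂P := by
              rw [hBsplit]; ring
          _ ≤ 1 := ih
  -- partial sums of measures
  have hpart : ∀ T : ℕ, ∑ n ∈ Finset.range T, (P (A n)).toReal ≤ 1 / c := by
    intro T
    have h1 : ∀ n, c * (P (A n)).toReal ≤ ∫ ω in A n, M n ω ∂P := by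
      intro n
      apply setIntegral_ge_of_const_le_real (hAmeas n) (measure_ne_top P _)
      · intro ω hω; exact hω.1
      · exact (hMint n).integrableOn
    have h2 : ∑ n ∈ Finset.range T, ∫ ω in A n, M n ω ∂P ≤ 1 := by
      have h3 : 0 ≤ ∫ ω in B T, M T ω ∂P :=
        setIntegral_nonneg (hBmeas T) fun ω _ => hV0 _ _
      linarith [hmain T]
    have h4 : c * ∑ n ∈ Finset.range T, (P (A n)).toReal ≤ 1 := by
      rw [Finset.mul_sum]
      calc ∑ n ∈ Finset.range T, c * (P (A n)).toReal
          ≤ ∑ n ∈ Finset.range T, ∫ ω in A n, M n ω ∂P :=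
            Finset.sum_le_sum fun n _ => h1 n
        _ ≤ 1 := h2
    rw [le_div_iff₀ hc, mul_comm]
    exact h4
  -- conclude
  have hsub : {ω | ∃ n, c ≤ ∏ i ∈ Finset.range n, W (X i ω)} ⊆ ⋃ n, A n := by
    intro ω hω
    have hω' : ∃ n, c ≤ M n ω := hω
    refine Set.mem_iUnion.mpr ⟨Nat.find hω', Nat.find_spec hω', fun m hm => ?_⟩
    exact lt_of_not_ge (Nat.find_min hω' hm)
  calc P {ω | ∃ n, c ≤ ∏ i ∈ Finset.range n, W (X i ω)} ≤ P (⋃ n, A n) := measure_mono hsub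
    _ ≤ ∑' n, P (A n) := measure_iUnion_le _
    _ ≤ ENNReal.ofReal (1 / c) := by
        rw [ENNReal.tsum_eq_iSup_sum]
        apply iSup_le
        intro s
        obtain ⟨T, hT⟩ : ∃ T, s ⊆ Finset.range T := s.exists_nat_subset_range
        calc ∑ n ∈ s, P (A n) ≤ ∑ n ∈ Finset.range T, P (A n) :=
              Finset.sum_le_sum_of_subset hT
          _ = ENNReal.ofReal (∑ n ∈ Finset.range T, (P (A n)).toReal) := by
              rw [ENNReal.ofReal_sum_of_nonneg (fun n _ => ENNReal.toReal_nonneg)]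
              exact Finset.sum_congr rfl fun n _ =>
                (ENNReal.ofReal_toReal (measure_ne_top P _)).symm
          _ ≤ ENNReal.ofReal (1 / c) := ENNReal.ofReal_le_ofReal (hpart T)

end Aux

/-- Time-uniform upper-tail Chernoff bound in KL form: for i.i.d. `[0,1]`-valued
random variables with mean `μ`,
`P(∃ n ≥ N, kl(μ̂ₙ, μ) ≥ y ∧ μ̂ₙ > μ) ≤ e^{-Ny}`. -/
theorem maximal_chernoff_upper {Ω : Type*} [MeasurableSpace Ω]
    (P : Measure Ω) [IsProbabilityMeasure P]
    (X : ℕ → Ω → ℝ) (hmeas : ∀ i, Measurable (X i))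
    (hindep : iIndepFun X P)
    (hident : ∀ i, IdentDistrib (X i) (X 0) P P)
    (μ : ℝ) (hbound : ∀ i, ∀ᵐ ω ∂P, X i ω ∈ Set.Icc (0:ℝ) 1)
    (hmean : ∀ i, ∫ ω, X i ω ∂P = μ)
    (N : ℕ) (hN : 1 ≤ N) (y : ℝ) (hy : 0 ≤ y) :
    P {ω | ∃ n, N ≤ n ∧
        klBin ((∑ i ∈ Finset.range n, X i ω) / n) μ ≥ y ∧
        (∑ i ∈ Finset.range n, X i ω) / n > μ}
      ≤ ENNReal.ofReal (Real.exp (-(N : ℝ) * y)) := by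
  classical
  set E := {ω : Ω | ∃ n, N ≤ n ∧
      klBin ((∑ i ∈ Finset.range n, X i ω) / n) μ ≥ y ∧
      (∑ i ∈ Finset.range n, X i ω) / n > μ} with hE
  have hint : ∀ i, Integrable (X i) P := by
    intro i
    refine Integrable.mono' (integrable_const 1) (hmeas i).aestronglyMeasurable ?_
    filter_upwards [hbound i] with ω h
    rw [Real.norm_eq_abs, abs_of_nonneg h.1]
    exact h.2
  -- the good set
  set G := {ω : Ω | ∀ i, X i ω ∈ Set.Icc (0:ℝ) 1} with hG
  have hGae : ∀ᵐ ω ∂P, ω ∈ G := ae_all_iff.mpr hbound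
  have hGc : P Gᶜ = 0 := ae_iff.mp hGae
  have hEbound : ∀ S : Set Ω, E ∩ G ⊆ S → P E ≤ P S := by
    intro S hS
    calc P E ≤ P (S ∪ Gᶜ) := by
          apply measure_mono
          intro ω hω
          by_cases h : ω ∈ G
          · exact Or.inl (hS ⟨hω, h⟩)
          · exact Or.inr h
      _ ≤ P S + P Gᶜ := measure_union_le _ _
      _ = P S := by rw [hGc, add_zero]
  -- μ ∈ [0, 1]
  have hμ0 : 0 ≤ μ := by
    rw [← hmean 0]
    apply integral_nonneg_of_ae
    filter_upwards [hbound 0] with ω h using h.1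
  have hμ1 : μ ≤ 1 := by
    rw [← hmean 0]
    calc ∫ ω, X 0 ω ∂P ≤ ∫ _ω, (1:ℝ) ∂P := by
          apply integral_mono_ae (hint 0) (integrable_const 1)
          filter_upwards [hbound 0] with ω h using h.2
      _ = 1 := by simp
  rcases eq_or_lt_of_le hy with hy0 | hy'
  · -- y = 0
    rw [← hy0]
    simp only [mul_zero, Real.exp_zero, ENNReal.ofReal_one]
    exact prob_le_one
  rcases eq_or_lt_of_le hμ0 with hμ0' | hμ0'
  · -- μ = 0 : all X i vanish a.e.
    have hz : ∀ i, ∀ᵐ ω ∂P, X i ω = 0 := by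
      intro i
      have h0 : (0:Ω → ℝ) ≤ᵐ[P] X i := by
        filter_upwards [hbound i] with ω h using h.1
      have := (integral_eq_zero_iff_of_nonneg_ae h0 (hint i)).mp (by rw [hmean i, ← hμ0'])
      filter_upwards [this] with ω h using h
    have hz' : ∀ᵐ ω ∂P, ∀ i, X i ω = 0 := ae_all_iff.mpr hz
    have hsub : E ⊆ {ω | ¬ ∀ i, X i ω = 0} := by
      rintro ω ⟨n, hn, _hkl, hgt⟩ hall
      have hs : (∑ i ∈ Finset.range n, X i ω) = 0 :=
        Finset.sum_eq_zero fun i _ => hall i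
      rw [hs, zero_div] at hgt
      linarith
    have : P E = 0 := measure_mono_null hsub (ae_iff.mp hz')
    rw [this]
    exact zero_le
  rcases eq_or_lt_of_le hμ1 with hμ1' | hμ1'
  · -- μ = 1 : all X i equal 1 a.e.
    have hz : ∀ i, ∀ᵐ ω ∂P, X i ω = 1 := by
      intro i
      have h0 : (0:Ω → ℝ) ≤ᵐ[P] fun ω => 1 - X i ω := by
        filter_upwards [hbound i] with ω h
        simp only [Pi.zero_apply]
        linarith [h.2]
      have hi : Integrable (fun ω => 1 - X i ω) P := (integrable_const 1).sub (hint i)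
      have hz0 : ∫ ω, (1 - X i ω) ∂P = 0 := by
        rw [integral_sub (integrable_const 1) (hint i), hmean i, hμ1']
        simp
      have := (integral_eq_zero_iff_of_nonneg_ae h0 hi).mp hz0
      filter_upwards [this] with ω h
      have : 1 - X i ω = 0 := h
      linarith
    have hz' : ∀ᵐ ω ∂P, ∀ i, X i ω = 1 := ae_all_iff.mpr hz
    have hsub : E ⊆ {ω | ¬ ∀ i, X i ω = 1} := by
      rintro ω ⟨n, hn, _hkl, hgt⟩ hall
      have hn0 : (n:ℝ) ≠ 0 := Nat.cast_ne_zero.mpr (by omega)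
      have hs : (∑ i ∈ Finset.range n, X i ω) = n := by
        rw [Finset.sum_congr rfl fun i _ => hall i]
        simp
      rw [hs, div_self hn0, hμ1'] at hgt
      linarith
    have : P E = 0 := measure_mono_null hsub (ae_iff.mp hz')
    rw [this]
    exact zero_le
  -- main case : 0 < μ < 1, 0 < y
  set S := {p : ℝ | p ∈ Set.Ioc μ 1 ∧ y ≤ klBin p μ} with hS
  by_cases hSne : S.Nonempty
  swap
  · -- S empty : the event is a.e. empty
    have hsub : E ∩ G ⊆ (∅ : Set Ω) := by
      rintro ω ⟨⟨n, hn, hkl, hgt⟩, hωG⟩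
      have hn0 : (0:ℝ) < n := by
        have : (1:ℕ) ≤ n := le_trans hN hn
        exact_mod_cast Nat.lt_of_lt_of_le Nat.zero_lt_one this
      have hs1 : (∑ i ∈ Finset.range n, X i ω) ≤ n := by
        have := Finset.sum_le_card_nsmul (Finset.range n) (fun i => X i ω) 1
          (fun i _ => (hωG i).2)
        simpa using this
      exact absurd ⟨⟨hgt, by rw [div_le_one hn0]; exact hs1⟩, hkl⟩
        (fun hmem => hSne ⟨_, hmem⟩)
    have : P E ≤ 0 := by
      have := hEbound ∅ hsub
      rwa [measure_empty] at this
    exact le_trans this (zero_le)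
  -- S nonempty
  set x₀ := sInf S with hx₀
  have hbdd : BddBelow S := ⟨μ, fun p hp => le_of_lt hp.1.1⟩
  have hx₀le : ∀ p ∈ S, x₀ ≤ p := fun p hp => csInf_le hbdd hp
  have hx₀1 : x₀ ≤ 1 := by
    obtain ⟨p₀, hp₀⟩ := hSne
    exact le_trans (hx₀le p₀ hp₀) hp₀.1.2
  have hcontkl : Continuous fun p => klBin p μ := my_klBin_continuous hμ0' hμ1'
  have hx₀kl : y ≤ klBin x₀ μ := by
    have hcl : x₀ ∈ closure S := csInf_mem_closure hSne hbdd
    have hclosed : IsClosed {p : ℝ | y ≤ klBin p μ} :=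
      isClosed_le continuous_const hcontkl
    exact (hclosed.closure_subset_iff.mpr fun p hp => hp.2) hcl
  have hx₀μ : μ < x₀ := by
    rcases lt_or_ge μ x₀ with h | h
    · exact h
    · exfalso
      have hge : μ ≤ x₀ := le_csInf hSne fun p hp => le_of_lt hp.1.1
      have hxx : x₀ = μ := le_antisymm h hge
      have : klBin μ μ = 0 := by
        unfold klBin
        rw [div_self hμ0'.ne', div_self (by linarith : (1:ℝ) - μ ≠ 0), Real.log_one]
        ring
      rw [hxx, this] at hx₀kl
      linarith
  -- the ε-approximation bound
  have hkey : ∀ ε ∈ Set.Ioo (0:ℝ) y, P E ≤ ENNReal.ofReal (Real.exp (-(N:ℝ)*(y-ε))) := by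
    rintro ε ⟨hε0, hεy⟩
    obtain ⟨δ, hδ0, hδ⟩ := Metric.continuousAt_iff.mp (hcontkl.continuousAt (x := x₀)) ε hε0
    set t := max ((μ + x₀)/2) (x₀ - δ/2) with ht
    have htμ : μ < t := lt_max_of_lt_left (by linarith)
    have htx₀ : t < x₀ := max_lt (by linarith) (by linarith)
    have ht1 : t < 1 := lt_of_lt_of_le htx₀ hx₀1
    have hdist : dist t x₀ < δ := by
      rw [Real.dist_eq, abs_of_nonpos (by linarith)]
      have h2 : x₀ - δ/2 ≤ t := le_max_right _ _
      linarith
    have htkl : y - ε ≤ klBin t μ := by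
      have h3 := hδ hdist
      rw [Real.dist_eq] at h3
      have h4 := (abs_lt.mp h3).1
      linarith
    obtain ⟨hlam0, hrval, hidt⟩ := my_lam_facts hμ0' htμ ht1
    set lam := Real.log (t*(1-μ)/(μ*(1-t))) with hlam
    set r := (1-μ)/(1-t) with hr
    have h1t : (0:ℝ) < 1 - t := by linarith
    have hr1 : (1:ℝ) ≤ r := by
      rw [hr, le_div_iff₀ h1t]
      linarith
    have hr0 : (0:ℝ) < r := lt_of_lt_of_le zero_lt_one hr1
    set W : ℝ → ℝ := fun u => Real.exp (lam * max 0 (min 1 u)) / r with hW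
    have hclm : Measurable fun u : ℝ => max 0 (min 1 u) :=
      measurable_const.max (measurable_const.min measurable_id)
    have hWm : Measurable W := by
      rw [hW]
      exact (Real.measurable_exp.comp (measurable_const.mul hclm)).div_const r
    have hW0 : ∀ u, 0 ≤ W u := fun u => div_nonneg (Real.exp_pos _).le hr0.le
    have hcl01 : ∀ u : ℝ, max 0 (min 1 u) ∈ Set.Icc (0:ℝ) 1 :=
      fun u => ⟨le_max_left _ _, max_le zero_le_one (min_le_left _ _)⟩
    have hWb : ∀ u, W u ≤ Real.exp lam / r := by
      intro u
      rw [hW]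
      apply (div_le_div_iff_of_pos_right hr0).mpr
      apply Real.exp_le_exp.mpr
      calc lam * max 0 (min 1 u) ≤ lam * 1 :=
            mul_le_mul_of_nonneg_left (hcl01 u).2 hlam0.le
        _ = lam := mul_one lam
    -- expectation bound
    have hWint : ∀ i, ∫ ω, W (X i ω) ∂P ≤ 1 := by
      intro i
      have hclme : Measurable fun ω => max 0 (min 1 (X i ω)) := hclm.comp (hmeas i)
      have hclint : Integrable (fun ω => max 0 (min 1 (X i ω))) P := by
        refine Integrable.mono' (integrable_const 1) hclme.aestronglyMeasurable ?_
        filter_upwards with ω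
        rw [Real.norm_eq_abs, abs_of_nonneg (hcl01 _).1]
        exact (hcl01 _).2
      have hclmean : ∫ ω, max 0 (min 1 (X i ω)) ∂P = μ := by
        rw [← hmean i]
        apply integral_congr_ae
        filter_upwards [hbound i] with ω h
        rw [min_eq_right h.2, max_eq_right h.1]
      have hexpint : Integrable (fun ω => Real.exp (lam * max 0 (min 1 (X i ω)))) P := by
        refine Integrable.mono' (integrable_const (Real.exp lam))
          (Real.measurable_exp.comp (measurable_const.mul hclme)).aestronglyMeasurable ?_
        filter_upwards with ω
        rw [Real.norm_eq_abs, abs_of_nonneg (Real.exp_pos _).le]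
        apply Real.exp_le_exp.mpr
        calc lam * max 0 (min 1 (X i ω)) ≤ lam * 1 :=
              mul_le_mul_of_nonneg_left (hcl01 _).2 hlam0.le
          _ = lam := mul_one lam
      have hlinint : Integrable
          (fun ω => 1 - max 0 (min 1 (X i ω)) + max 0 (min 1 (X i ω)) * Real.exp lam) P :=
        ((integrable_const 1).sub hclint).add (hclint.mul_const _)
      have hmono : ∀ ω, Real.exp (lam * max 0 (min 1 (X i ω)))
          ≤ 1 - max 0 (min 1 (X i ω)) + max 0 (min 1 (X i ω)) * Real.exp lam :=
        fun ω => my_exp_chord (hcl01 _).1 (hcl01 _).2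
      have h5 : ∫ ω, Real.exp (lam * max 0 (min 1 (X i ω))) ∂P ≤ 1 - μ + μ * Real.exp lam := by
        calc ∫ ω, Real.exp (lam * max 0 (min 1 (X i ω))) ∂P
            ≤ ∫ ω, (1 - max 0 (min 1 (X i ω)) + max 0 (min 1 (X i ω)) * Real.exp lam) ∂P :=
              integral_mono hexpint hlinint hmono
          _ = 1 - μ + μ * Real.exp lam := by
              have hi1 : Integrable (fun ω => 1 - max 0 (min 1 (X i ω))) P :=
                (integrable_const 1).sub hclint
              have hi2 : Integrable (fun ω => max 0 (min 1 (X i ω)) * Real.exp lam) P :=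
                hclint.mul_const _
              have hic : Integrable (fun _ : Ω => (1:ℝ)) P := integrable_const 1
              rw [integral_add hi1 hi2, integral_sub hic hclint, integral_mul_const, hclmean]
              simp
      calc ∫ ω, W (X i ω) ∂P
          = (∫ ω, Real.exp (lam * max 0 (min 1 (X i ω))) ∂P) / r := by
            rw [hW]
            exact integral_div r _
        _ ≤ (1 - μ + μ * Real.exp lam) / r := (div_le_div_iff_of_pos_right hr0).mpr h5
        _ = 1 := by rw [hrval]; exact div_self hr0.ne'
    set c := Real.exp ((N:ℝ)*(y-ε)) with hc
    have hville := my_ville P X hmeas hindep W hWm hW0 (Real.exp lam / r) hWb hWint c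
      (Real.exp_pos _)
    have hsub : E ∩ G ⊆ {ω | ∃ n, c ≤ ∏ i ∈ Finset.range n, W (X i ω)} := by
      rintro ω ⟨⟨n, hn, hkl, hgt⟩, hωG⟩
      refine ⟨n, ?_⟩
      have hn1 : 1 ≤ n := le_trans hN hn
      have hnpos : (0:ℝ) < n := by exact_mod_cast Nat.lt_of_lt_of_le Nat.zero_lt_one hn1
      have hcleq : ∀ i, max 0 (min 1 (X i ω)) = X i ω := by
        intro i
        rw [min_eq_right (hωG i).2, max_eq_right (hωG i).1]
      have hprod : ∏ i ∈ Finset.range n, W (X i ω)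
          = Real.exp (lam * ∑ i ∈ Finset.range n, X i ω) / r ^ n := by
        rw [hW]
        rw [Finset.prod_div_distrib, Finset.prod_const, Finset.card_range]
        congr 1
        rw [← Real.exp_sum]
        congr 1
        rw [Finset.mul_sum]
        exact Finset.sum_congr rfl fun i _ => by rw [hcleq i]
      rw [hprod]
      have hs1 : (∑ i ∈ Finset.range n, X i ω) ≤ n := by
        have := Finset.sum_le_card_nsmul (Finset.range n) (fun i => X i ω) 1
          (fun i _ => (hωG i).2)
        simpa using this
      have hmuS : (∑ i ∈ Finset.range n, X i ω) / n ∈ S :=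
        ⟨⟨hgt, by rw [div_le_one hnpos]; exact hs1⟩, hkl⟩
      have h1 : t ≤ (∑ i ∈ Finset.range n, X i ω) / n :=
        le_of_lt (lt_of_lt_of_le htx₀ (hx₀le _ hmuS))
      have h2 : (N:ℝ) * (y - ε) ≤ lam * (∑ i ∈ Finset.range n, X i ω)
          - n * Real.log r := by
        have e1 : lam * (∑ i ∈ Finset.range n, X i ω) - n * Real.log r
            = (n:ℝ) * (lam * ((∑ i ∈ Finset.range n, X i ω) / n) - Real.log r) := by
          field_simp
        rw [e1]
        have e2 : y - ε ≤ lam * ((∑ i ∈ Finset.range n, X i ω) / n) - Real.log r := by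
          have h6 := mul_le_mul_of_nonneg_left h1 hlam0.le
          linarith [hidt, htkl]
        calc (N:ℝ) * (y - ε) ≤ (n:ℝ) * (y - ε) := by
              apply mul_le_mul_of_nonneg_right _ (by linarith)
              exact_mod_cast hn
          _ ≤ (n:ℝ) * (lam * ((∑ i ∈ Finset.range n, X i ω) / n) - Real.log r) :=
              mul_le_mul_of_nonneg_left e2 hnpos.le
      have e3 : Real.exp (lam * ∑ i ∈ Finset.range n, X i ω) / r ^ n
          = Real.exp (lam * (∑ i ∈ Finset.range n, X i ω) - n * Real.log r) := by
        rw [Real.exp_sub]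
        congr 1
        rw [← Real.log_pow, Real.exp_log (pow_pos hr0 n)]
      rw [e3, hc]
      exact Real.exp_le_exp.mpr h2
    calc P E ≤ P {ω | ∃ n, c ≤ ∏ i ∈ Finset.range n, W (X i ω)} := hEbound _ hsub
      _ ≤ ENNReal.ofReal (1 / c) := hville
      _ = ENNReal.ofReal (Real.exp (-(N:ℝ)*(y-ε))) := by
          rw [hc, one_div, ← Real.exp_neg]
          ring_nf
  -- let ε → 0⁺
  have htend : Filter.Tendsto (fun ε : ℝ => ENNReal.ofReal (Real.exp (-(N:ℝ)*(y-ε))))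
      (nhdsWithin 0 (Set.Ioi 0)) (nhds (ENNReal.ofReal (Real.exp (-(N:ℝ)*y)))) := by
    have hco : Continuous fun ε : ℝ => ENNReal.ofReal (Real.exp (-(N:ℝ)*(y-ε))) :=
      ENNReal.continuous_ofReal.comp (Real.continuous_exp.comp (by continuity))
    have h7 := hco.continuousAt (x := (0:ℝ))
    rw [ContinuousAt] at h7
    simp only [sub_zero] at h7
    exact h7.mono_left nhdsWithin_le_nhds
  refine ge_of_tendsto htend ?_
  filter_upwards [Ioo_mem_nhdsGT_of_mem (⟨le_refl 0, hy'⟩ : (0:ℝ) ∈ Set.Ico 0 y)] with ε hε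
  exact hkey ε hε
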